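/- Let a be a positive integer, η > 0 and 0 ≤ s < 1 satisfy a·η² ≥ (2s + 2η/3)·log 3, and let t := (s + η)·a. Let (Ω, μ) be a probability space and let Z_i : Ω → Bool for i ∈ Fin a be mutually independent Boolean random variables with μ{ω : Z_i ω = true} ≤ s for every i. Then μ{ ω : |{i : Z_i ω = true}| ≥ t } ≤ 1/3. -/

import Mathlib

open MeasureTheory ProbabilityTheory

open scoped ENNReal

lemma fact_lb (n : ℕ) : 2 * 3 ^ n ≤ (n + 2).factorial := by
  induction n with
  | zero => simp [Nat.factorial]
  | succ n ih =>
    calc 2 * 3 ^ (n + 1) = 3 * (2 * 3 ^ n) := by ring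
    _ ≤ 3 * (n + 2).factorial := Nat.mul_le_mul_left 3 ih
    _ ≤ (n + 3) * (n + 2).factorial := Nat.mul_le_mul_right _ (by omega)
    _ = (n + 3).factorial := (Nat.factorial_succ _).symm

lemma exp_le_bern {x : ℝ} (h0 : 0 ≤ x) (h3 : x < 3) :
    Real.exp x ≤ 1 + x + x ^ 2 / (2 * (1 - x / 3)) := by
  have hsum : Summable (fun n : ℕ => x ^ n / n.factorial) := Real.summable_pow_div_factorial x
  have hexp : Real.exp x = ∑' n : ℕ, x ^ n / n.factorial := by
    rw [Real.exp_eq_exp_ℝ, NormedSpace.exp_eq_tsum_div]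
  have hsplit := Summable.sum_add_tsum_nat_add (f := fun n : ℕ => x ^ n / n.factorial) 2 hsum
  have hr : x / 3 < 1 := by linarith
  have hr0 : 0 ≤ x / 3 := by linarith
  have hterm : ∀ n : ℕ, x ^ (n + 2) / ((n + 2).factorial : ℝ) ≤ x ^ 2 / 2 * (x / 3) ^ n := by
    intro n
    have h1 : (2 * 3 ^ n : ℝ) ≤ ((n + 2).factorial : ℝ) := by
      exact_mod_cast fact_lb n
    have h2 : x ^ 2 / 2 * (x / 3) ^ n = x ^ (n + 2) / (2 * 3 ^ n) := by
      rw [div_pow]; ring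
    rw [h2]
    gcongr
  have hgs : Summable (fun n : ℕ => x ^ 2 / 2 * (x / 3) ^ n) :=
    (summable_geometric_of_lt_one hr0 hr).mul_left _
  have htail : (∑' n : ℕ, x ^ (n + 2) / ((n + 2).factorial : ℝ)) ≤ x ^ 2 / 2 * (1 - x / 3)⁻¹ := by
    calc (∑' n : ℕ, x ^ (n + 2) / ((n + 2).factorial : ℝ))
        ≤ ∑' n : ℕ, x ^ 2 / 2 * (x / 3) ^ n :=
          Summable.tsum_le_tsum hterm ((summable_nat_add_iff 2).mpr hsum) hgs
      _ = x ^ 2 / 2 * ∑' n : ℕ, (x / 3) ^ n := tsum_mul_left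
      _ = x ^ 2 / 2 * (1 - x / 3)⁻¹ := by rw [tsum_geometric_of_lt_one hr0 hr]
  have hrange : ∑ i ∈ Finset.range 2, x ^ i / (i.factorial : ℝ) = 1 + x := by
    simp [Finset.sum_range_succ]
  have hfin : x ^ 2 / 2 * (1 - x / 3)⁻¹ = x ^ 2 / (2 * (1 - x / 3)) := by
    have hx : (0:ℝ) < 1 - x / 3 := by linarith
    field_simp
  calc Real.exp x = ∑' n : ℕ, x ^ n / n.factorial := hexp
    _ = (1 + x) + ∑' n : ℕ, x ^ (n + 2) / ((n + 2).factorial : ℝ) := by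
        rw [← hsplit, hrange]
    _ ≤ (1 + x) + x ^ 2 / 2 * (1 - x / 3)⁻¹ := by linarith
    _ = 1 + x + x ^ 2 / (2 * (1 - x / 3)) := by rw [hfin]

lemma bern_claim (a : ℕ) (hapos : 0 < a) (η s : ℝ) (hη : 0 < η) (hs0 : 0 ≤ s)
    (hcond : (a : ℝ) * η ^ 2 ≥ (2 * s + 2 * η / 3) * Real.log 3) :
    (a : ℝ) * ((Real.exp (3 * η / (3 * s + η)) - 1) * s) + Real.log 3 ≤
      (3 * η / (3 * s + η)) * ((s + η) * (a : ℝ)) := by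
  have hD : (0:ℝ) < 3 * s + η := by linarith
  set L : ℝ := 3 * η / (3 * s + η) with hLdef
  have hLD : L * (3 * s + η) = 3 * η := by rw [hLdef, div_mul_cancel₀ _ hD.ne']
  have hL0 : 0 < L := by positivity
  have ha1 : (1:ℝ) ≤ (a:ℝ) := by exact_mod_cast hapos
  have hlog3 : 0 < Real.log 3 := Real.log_pos (by norm_num)
  suffices h : Real.log 3 ≤ (a:ℝ) * (L * η - s * (Real.exp L - 1 - L)) by nlinarith [h]
  rcases hs0.eq_or_lt with hs | hs
  · -- s = 0
    have hL3 : L = 3 := by rw [hLdef, ← hs]; field_simp; ring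
    have key : (2 / 3 * Real.log 3) * η ≤ ((a:ℝ) * η) * η := by nlinarith [hcond]
    have haη := le_of_mul_le_mul_right key hη
    rw [hL3, ← hs]
    nlinarith [hlog3]
  · -- s > 0
    have hL3' : L < 3 := by rw [hLdef, div_lt_iff₀ hD]; nlinarith
    have hE := exp_le_bern hL0.le hL3'
    have hden : (0:ℝ) < 2 * (1 - L / 3) := by linarith
    have hE2 : (Real.exp L - 1 - L) * (2 * (1 - L / 3)) ≤ L ^ 2 :=
      (le_div_iff₀ hden).mp (by linarith)
    have h6 : (2 * (1 - L / 3)) * (3 * s + η) = 6 * s := by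
      have : (2 * (1 - L / 3)) * (3 * s + η) = 2 * (3 * s + η) - (2 / 3) * (L * (3 * s + η)) := by
        ring
      rw [this, hLD]; ring
    have hE3 : (Real.exp L - 1 - L) * (6 * s) ≤ L ^ 2 * (3 * s + η) := by
      calc (Real.exp L - 1 - L) * (6 * s)
          = ((Real.exp L - 1 - L) * (2 * (1 - L / 3))) * (3 * s + η) := by rw [← h6]; ring
        _ ≤ L ^ 2 * (3 * s + η) := mul_le_mul_of_nonneg_right hE2 hD.le
    have key2 : s * (Real.exp L - 1 - L) * (6 * (3 * s + η)) ≤ 9 * η ^ 2 := by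
      calc s * (Real.exp L - 1 - L) * (6 * (3 * s + η))
          = ((Real.exp L - 1 - L) * (6 * s)) * (3 * s + η) := by ring
        _ ≤ (L ^ 2 * (3 * s + η)) * (3 * s + η) := mul_le_mul_of_nonneg_right hE3 hD.le
        _ = (L * (3 * s + η)) * (L * (3 * s + η)) := by ring
        _ = 9 * η ^ 2 := by rw [hLD]; ring
    have h9a : (a:ℝ) * (L * η * (3 * s + η)) = 3 * ((a:ℝ) * η ^ 2) := by
      have h9 : L * η * (3 * s + η) = 3 * η ^ 2 := by
        calc L * η * (3 * s + η) = (L * (3 * s + η)) * η := by ring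
          _ = 3 * η ^ 2 := by rw [hLD]; ring
      rw [h9]; ring
    have fact1 : (a:ℝ) * (s * (Real.exp L - 1 - L) * (6 * (3 * s + η))) ≤ (a:ℝ) * (9 * η ^ 2) :=
      mul_le_mul_of_nonneg_left key2 (by positivity)
    have base : 6 * ((3 * s + η) * Real.log 3) ≤ 9 * ((a:ℝ) * η ^ 2) := by nlinarith [hcond]
    have goal6 : Real.log 3 * (6 * (3 * s + η)) ≤
        ((a:ℝ) * (L * η - s * (Real.exp L - 1 - L))) * (6 * (3 * s + η)) := by
      nlinarith [fact1, h9a, base]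
    exact le_of_mul_le_mul_right goal6 (by positivity)

/-- Probabilistic core of Lemma lm-bd-1 (second bullet): a Chernoff/Bernstein upper
tail bound shows the match count reaches the threshold with probability at most `1/3`. -/
theorem stmt3 (a : ℕ) (hapos : 0 < a) (η s : ℝ) (hη : 0 < η) (hs0 : 0 ≤ s) (hs1 : s < 1)
    (hcond : (a : ℝ) * η ^ 2 ≥ (2 * s + 2 * η / 3) * Real.log 3)
    (t : ℝ) (ht : t = (s + η) * a)
    {Ω : Type*} [MeasurableSpace Ω] (μ : Measure Ω) [IsProbabilityMeasure μ]
    (Z : Fin a → Ω → Bool)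
    (hindep : iIndepFun Z μ)
    (hZ : ∀ i, μ {ω | Z i ω = true} ≤ ENNReal.ofReal s) :
    μ {ω | t ≤ ((Finset.univ.filter fun i => Z i ω = true).card : ℝ)} ≤ 1 / 3 := by
  have hD : (0:ℝ) < 3 * s + η := by linarith
  set L : ℝ := 3 * η / (3 * s + η) with hLdef
  have hL0 : (0:ℝ) ≤ L := by positivity
  set θr : ℝ := Real.exp L - 1 with hθrdef
  have hθr0 : 0 ≤ θr := by
    have := Real.add_one_le_exp L
    rw [hθrdef]; linarith
  set θ : ℝ≥0∞ := ENNReal.ofReal θr with hθdef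
  set p : Fin a → ℝ≥0∞ := fun i => μ {ω | Z i ω = true} with hpdef
  set A : Finset (Fin a) → Set Ω := fun T => ⋂ i ∈ T, {ω | Z i ω = true} with hAdef
  have hA : ∀ T : Finset (Fin a), μ (A T) = ∏ i ∈ T, p i := by
    intro T
    refine hindep.meas_biInter (fun i _ => ?_)
    exact ⟨{true}, measurableSet_singleton true, by ext ω; simp⟩
  set M : Finset (Fin a) → Set Ω := fun T => toMeasurable μ (A T) with hMdef
  set f : Ω → ℝ≥0∞ := fun ω => ∑ T : Finset (Fin a), θ ^ T.card * (M T).indicator (fun _ => (1:ℝ≥0∞)) ω with hfdef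
  have hfmeas : Measurable f := by
    apply Finset.measurable_sum
    intro T _
    exact (measurable_const.indicator (measurableSet_toMeasurable μ (A T))).const_mul _
  set c : ℝ≥0∞ := ENNReal.ofReal (Real.exp (L * t)) with hcdef
  have hc0 : c ≠ 0 := (ENNReal.ofReal_pos.mpr (Real.exp_pos _)).ne'
  have hctop : c ≠ ⊤ := ENNReal.ofReal_ne_top
  have hsub : {ω | t ≤ ((Finset.univ.filter fun i => Z i ω = true).card : ℝ)}
      ⊆ {ω | c ≤ f ω} := by
    intro ω hω
    simp only [Set.mem_setOf_eq] at hω ⊢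
    set N := (Finset.univ.filter fun i => Z i ω = true).card with hN
    have step1 : (∑ T : Finset (Fin a), θ ^ T.card * (A T).indicator (fun _ => (1:ℝ≥0∞)) ω) = (1 + θ) ^ N := by
      have h1 : ∀ T : Finset (Fin a), θ ^ T.card * (A T).indicator (fun _ => (1:ℝ≥0∞)) ω
          = ∏ i ∈ T, (θ * if Z i ω = true then 1 else 0) := by
        intro T
        rw [Finset.prod_mul_distrib, Finset.prod_const, Finset.prod_boole]
        by_cases h : ∀ i ∈ T, Z i ω = true
        · have hmem : ω ∈ A T := by
            simp only [hAdef, Set.mem_iInter, Set.mem_setOf_eq]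
            exact h
          rw [Set.indicator_of_mem hmem, if_pos h]
        · have hmem : ω ∉ A T := by
            simp only [hAdef, Set.mem_iInter, Set.mem_setOf_eq]
            exact fun hc => h fun i hi => hc i hi
          rw [Set.indicator_of_notMem hmem, if_neg h, mul_zero]
      calc ∑ T : Finset (Fin a), θ ^ T.card * (A T).indicator (fun _ => (1:ℝ≥0∞)) ω
          = ∑ T ∈ (Finset.univ : Finset (Fin a)).powerset,
              ((∏ i ∈ T, (θ * if Z i ω = true then 1 else 0)) * ∏ _i ∈ Finset.univ \ T, 1) := by
            rw [Finset.powerset_univ]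
            exact Finset.sum_congr rfl
              (fun T _ => by rw [h1 T, Finset.prod_const_one, mul_one])
        _ = ∏ i : Fin a, ((θ * if Z i ω = true then 1 else 0) + 1) := (Finset.prod_add _ _ _).symm
        _ = ∏ i : Fin a, (if Z i ω = true then 1 + θ else 1) := by
            refine Finset.prod_congr rfl (fun i _ => ?_)
            by_cases h : Z i ω = true <;> simp [h, add_comm]
        _ = (1 + θ) ^ N := by
            rw [← Finset.prod_filter, Finset.prod_const, hN]
    have h1θ : (1 : ℝ≥0∞) + θ = ENNReal.ofReal (Real.exp L) := by
      rw [hθdef, ← ENNReal.ofReal_one, ← ENNReal.ofReal_add zero_le_one hθr0]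
      congr 1
      rw [hθrdef]; ring
    have step2 : c ≤ (1 + θ) ^ N := by
      have hpow : (1 + θ) ^ N = ENNReal.ofReal (Real.exp (L * N)) := by
        rw [h1θ, ← ENNReal.ofReal_pow (Real.exp_pos _).le, ← Real.exp_nat_mul, mul_comm]
      rw [hpow, hcdef]
      exact ENNReal.ofReal_le_ofReal
        (Real.exp_le_exp.mpr (mul_le_mul_of_nonneg_left hω hL0))
    calc c ≤ (1 + θ) ^ N := step2
      _ = ∑ T : Finset (Fin a), θ ^ T.card * (A T).indicator (fun _ => (1:ℝ≥0∞)) ω := step1.symm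
      _ ≤ f ω := by
          refine Finset.sum_le_sum (fun T _ => ?_)
          exact mul_le_mul_right
            (Set.indicator_le_indicator_of_subset (subset_toMeasurable μ (A T))
              (fun _ => zero_le) ω) _
  have hint : ∫⁻ ω, f ω ∂μ = ∑ T : Finset (Fin a), θ ^ T.card * μ (A T) := by
    simp only [hfdef]
    beta_reduce
    rw [lintegral_finset_sum _
      (fun T _ => (measurable_const.indicator (measurableSet_toMeasurable μ (A T))).const_mul _)]
    refine Finset.sum_congr rfl (fun T _ => ?_)
    rw [lintegral_const_mul _ (measurable_const.indicator (measurableSet_toMeasurable μ (A T))),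
      lintegral_indicator_const (measurableSet_toMeasurable μ (A T)), one_mul,
      measure_toMeasurable]
  have hmgf : ∑ T : Finset (Fin a), θ ^ T.card * μ (A T) = ∏ i : Fin a, (θ * p i + 1) := by
    rw [Finset.prod_add, Finset.powerset_univ]
    refine Finset.sum_congr rfl (fun T _ => ?_)
    rw [Finset.prod_const_one, mul_one, Finset.prod_mul_distrib, Finset.prod_const, hA T]
  have hbound : ∏ i : Fin a, (θ * p i + 1)
      ≤ ENNReal.ofReal (Real.exp ((a:ℝ) * (θr * s))) := by
    calc ∏ i : Fin a, (θ * p i + 1) ≤ ∏ _i : Fin a, (θ * ENNReal.ofReal s + 1) :=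
          Finset.prod_le_prod' (fun i _ => add_le_add_left (mul_le_mul_right (hZ i) θ) 1)
      _ = (θ * ENNReal.ofReal s + 1) ^ a := by
          rw [Finset.prod_const, Finset.card_univ, Fintype.card_fin]
      _ ≤ (ENNReal.ofReal (Real.exp (θr * s))) ^ a := by
          gcongr
          have h2 : θ * ENNReal.ofReal s + 1 = ENNReal.ofReal (θr * s + 1) := by
            rw [hθdef, ← ENNReal.ofReal_mul hθr0, ← ENNReal.ofReal_one,
              ← ENNReal.ofReal_add (mul_nonneg hθr0 hs0) zero_le_one]
          rw [h2]
          exact ENNReal.ofReal_le_ofReal (Real.add_one_le_exp _)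
      _ = ENNReal.ofReal (Real.exp ((a:ℝ) * (θr * s))) := by
          rw [← ENNReal.ofReal_pow (Real.exp_pos _).le, ← Real.exp_nat_mul]
  have hclaim := bern_claim a hapos η s hη hs0 hcond
  rw [← hLdef] at hclaim
  have hreal : Real.exp ((a:ℝ) * (θr * s)) ≤ 1 / 3 * Real.exp (L * t) := by
    have h13 : Real.log (1 / 3) = - Real.log 3 := by rw [one_div, Real.log_inv]
    have hle : (a:ℝ) * (θr * s) ≤ Real.log (1 / 3) + L * t := by
      rw [h13, ht, hθrdef]; linarith [hclaim]
    calc Real.exp ((a:ℝ) * (θr * s)) ≤ Real.exp (Real.log (1 / 3) + L * t) :=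
          Real.exp_le_exp.mpr hle
      _ = 1 / 3 * Real.exp (L * t) := by
          rw [Real.exp_add, Real.exp_log (by norm_num : (0:ℝ) < 1 / 3)]
  calc μ {ω | t ≤ ((Finset.univ.filter fun i => Z i ω = true).card : ℝ)}
      ≤ μ {ω | c ≤ f ω} := measure_mono hsub
    _ ≤ (∫⁻ ω, f ω ∂μ) / c := meas_ge_le_lintegral_div hfmeas.aemeasurable hc0 hctop
    _ ≤ ENNReal.ofReal (Real.exp ((a:ℝ) * (θr * s))) / c := by
        gcongr
        rw [hint, hmgf]; exact hbound
    _ ≤ 1 / 3 := by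
        apply ENNReal.div_le_of_le_mul
        have h3 : (1 / 3 : ℝ≥0∞) = ENNReal.ofReal (1 / 3) := by
          rw [ENNReal.ofReal_div_of_pos (by norm_num), ENNReal.ofReal_one,
            ENNReal.ofReal_ofNat]
        rw [hcdef, h3, ← ENNReal.ofReal_mul (by norm_num)]
        exact ENNReal.ofReal_le_ofReal hreal
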